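/- Let A and B be compact bounded linear operators on C(S²) such that I − A is injective (so that, by the Riesz theory, (I − A)⁻¹ exists as a bounded linear operator on C(S²)), and suppose that the operator norm satisfies ‖(I − A)⁻¹ ∘ (B − A) ∘ B‖ < 1. Then I − B is bijective, its inverse (I − B)⁻¹ : C(S²) → C(S²) is a bounded linear operator, and ‖(I − B)⁻¹‖ ≤ (1 + ‖(I − A)⁻¹ ∘ B‖) / (1 − ‖(I − A)⁻¹ ∘ (B − A) ∘ B‖). -/

import Mathlib

variable {X : Type*} [NormedAddCommGroup X] [NormedSpace ℝ X]

/-- `1 - K` is bounded below when `K` is compact and `1 - K` is injective. -/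
lemma riesz_bounded_below (K : X →L[ℝ] X) (hK : IsCompactOperator (⇑K))
    (hinj : Function.Injective (⇑(1 - K))) :
    ∃ c : ℝ, 0 < c ∧ ∀ x : X, ‖x‖ ≤ c * ‖(1 - K) x‖ := by
  by_contra hcon
  push_neg at hcon
  have hseq : ∀ n : ℕ, ∃ u : X, ‖u‖ = 1 ∧ ‖(1 - K) u‖ < 1 / (n + 1) := by
    intro n
    obtain ⟨x, hx⟩ := hcon (n + 1) (by positivity)
    have hx0 : x ≠ 0 := by
      rintro rfl
      simp at hx
    refine ⟨‖x‖⁻¹ • x, ?_, ?_⟩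
    · rw [norm_smul, norm_inv, norm_norm, inv_mul_cancel₀ (norm_ne_zero_iff.mpr hx0)]
    · rw [map_smul, norm_smul, norm_inv, norm_norm]
      rw [div_eq_mul_inv, one_mul]
      have h1 : ‖(1 - K) x‖ < ‖x‖ / (n + 1) := by
        rw [lt_div_iff₀ (by positivity)]
        nlinarith [hx]
      calc ‖x‖⁻¹ * ‖(1 - K) x‖ < ‖x‖⁻¹ * (‖x‖ / (n + 1)) := by
            apply mul_lt_mul_of_pos_left h1
            exact inv_pos.mpr (norm_pos_iff.mpr hx0)
        _ = (n + 1 : ℝ)⁻¹ := by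
            rw [div_eq_mul_inv, ← mul_assoc, inv_mul_cancel₀ (norm_ne_zero_iff.mpr hx0), one_mul]
  choose u hu1 hu2 using hseq
  obtain ⟨M, hMc, hMsub⟩ :=
    hK.image_subset_compact_of_bounded (𝕜₁ := ℝ) (f := (K : X →ₗ[ℝ] X))
      (Metric.isBounded_closedBall (x := (0 : X)) (r := 1))
  have hmem : ∀ n, K (u n) ∈ M := by
    intro n
    apply hMsub
    exact ⟨u n, by simp [Metric.mem_closedBall, hu1 n], rfl⟩
  obtain ⟨y, _, φ, hφ, hconv⟩ := hMc.tendsto_subseq hmem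
  have hlim0 : Filter.Tendsto (fun n => (1 - K) (u (φ n))) Filter.atTop (nhds 0) := by
    rw [tendsto_iff_norm_sub_tendsto_zero]
    apply squeeze_zero (fun n => by positivity) (fun n => ?_)
      (tendsto_one_div_add_atTop_nhds_zero_nat)
    · simp only [sub_zero]
      exact le_trans (hu2 (φ n)).le (by
        have h := hφ.le_apply (x := n)
        apply one_div_le_one_div_of_le (by positivity)
        exact_mod_cast Nat.succ_le_succ h)
  have hulim : Filter.Tendsto (fun n => u (φ n)) Filter.atTop (nhds y) := by
    have : (fun n => u (φ n)) = fun n => (1 - K) (u (φ n)) + K (u (φ n)) := by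
      funext n; simp
    rw [this]
    simpa using hlim0.add hconv
  have hy1 : ‖y‖ = 1 := by
    have := (continuous_norm.tendsto y).comp hulim
    simp only [Function.comp_def] at this
    have h2 : Filter.Tendsto (fun n => ‖u (φ n)‖) Filter.atTop (nhds 1) := by
      simpa [hu1] using Filter.tendsto_const_nhds (x := (1 : ℝ)) (f := Filter.atTop (α := ℕ))
    exact tendsto_nhds_unique this h2
  have hy0 : (1 - K) y = 0 := by
    have h1 : Filter.Tendsto (fun n => (1 - K) (u (φ n))) Filter.atTop (nhds ((1 - K) y)) :=
      ((1 - K).continuous.tendsto y).comp hulim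
    exact tendsto_nhds_unique h1 hlim0
  have : y = 0 := hinj (by simpa using hy0)
  rw [this] at hy1
  simp at hy1

/-- Riesz theory: if `K` is a compact operator and `1 - K` is injective, then `1 - K`
is surjective. -/
lemma riesz_surjective [CompleteSpace X] (K : X →L[ℝ] X) (hK : IsCompactOperator (⇑K))
    (hinj : Function.Injective (⇑(1 - K))) :
    Function.Surjective (⇑(1 - K)) := by
  obtain ⟨c, hc, hbdd⟩ := riesz_bounded_below K hK hinj
  have hanti : AntilipschitzWith c.toNNReal (⇑(1 - K)) := by
    apply (1 - K).antilipschitz_of_bound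
    intro x
    simpa [Real.coe_toNNReal c hc.le] using hbdd x
  -- powers
  have hpow_inj : ∀ n : ℕ, Function.Injective (⇑((1 - K) ^ n)) := by
    intro n
    induction n with
    | zero => intro x y h; simpa using h
    | succ n ih =>
      rw [pow_succ]
      intro x y hxy
      simp only [ContinuousLinearMap.mul_apply] at hxy
      exact hinj (ih hxy)
  have hpow_anti : ∀ n : ℕ, AntilipschitzWith (c.toNNReal ^ n) (⇑((1 - K) ^ n)) := by
    intro n
    induction n with
    | zero => simpa using AntilipschitzWith.id
    | succ n ih =>
      have : ⇑((1 - K) ^ (n + 1)) = ⇑((1 - K) ^ n) ∘ ⇑(1 - K) := by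
        funext x; simp [pow_succ]
      rw [this, pow_succ']
      exact AntilipschitzWith.comp ih hanti
  have hcomm : ∀ (n : ℕ) (z : X), ((1 - K) ^ (n + 1)) z = ((1 - K) ^ n) ((1 - K) z) := by
    intro n z
    rw [pow_succ, ContinuousLinearMap.mul_apply]
  have hcomm' : ∀ (n : ℕ) (z : X), ((1 - K) ^ (n + 1)) z = (1 - K) (((1 - K) ^ n) z) := by
    intro n z
    rw [pow_succ', ContinuousLinearMap.mul_apply]
  set V : ℕ → Submodule ℝ X := fun n => LinearMap.range (((1 - K) ^ n : X →L[ℝ] X) : X →ₗ[ℝ] X) with hV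
  have hVclosed : ∀ n, IsClosed (V n : Set X) := by
    intro n
    have := (hpow_anti n).isClosed_range ((1 - K) ^ n).uniformContinuous
    rw [hV]; simp only [LinearMap.coe_range, ContinuousLinearMap.coe_coe]; exact this
  have hVsucc : ∀ n, V (n + 1) ≤ V n := by
    intro n x hx
    obtain ⟨w, rfl⟩ := hx
    exact ⟨(1 - K) w, (hcomm n w).symm⟩
  have hVmono : Antitone V := antitone_nat_of_succ_le hVsucc
  by_contra hsurj
  rw [Function.Surjective] at hsurj
  push_neg at hsurj
  obtain ⟨y₀, hy₀⟩ := hsurj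
  have hstrict : ∀ n : ℕ, ((1 - K) ^ n) y₀ ∈ V n ∧ ((1 - K) ^ n) y₀ ∉ V (n + 1) := by
    intro n
    constructor
    · exact ⟨y₀, rfl⟩
    · rintro ⟨z, hz⟩
      have hz' : ((1 - K) ^ n) ((1 - K) z) = ((1 - K) ^ n) y₀ := by
        rw [← hz, ContinuousLinearMap.coe_coe, hcomm n z]
      exact hy₀ z (hpow_inj n hz')
  -- Riesz lemma sequence
  have hriesz : ∀ n : ℕ, ∃ u : X, u ∈ V n ∧ ‖u‖ = 1 ∧
      ∀ y ∈ V (n + 1), (1 / 2 : ℝ) ≤ ‖u - y‖ := by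
    intro n
    set F : Subspace ℝ (V n) := (V (n + 1)).comap (V n).subtype with hF
    have hFc : IsClosed (F : Set (V n)) := by
      have : (F : Set (V n)) = ((V n).subtype) ⁻¹' (V (n + 1) : Set X) := rfl
      rw [this]
      exact (hVclosed (n + 1)).preimage continuous_subtype_val
    have hex : ∃ x : (V n), x ∉ F := by
      refine ⟨⟨((1 - K) ^ n) y₀, (hstrict n).1⟩, ?_⟩
      intro hmem
      exact (hstrict n).2 hmem
    obtain ⟨x₀, hx₀F, hx₀⟩ := riesz_lemma hFc hex (show (1 / 2 : ℝ) < 1 by norm_num)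
    have hx₀ne : (x₀ : X) ≠ 0 := by
      intro h
      apply hx₀F
      have : x₀ = 0 := Subtype.ext h
      rw [this]
      exact F.zero_mem
    have hnx₀ : (0 : ℝ) < ‖(x₀ : X)‖ := norm_pos_iff.mpr hx₀ne
    refine ⟨‖(x₀ : X)‖⁻¹ • (x₀ : X), ?_, ?_, ?_⟩
    · exact (V n).smul_mem _ x₀.2
    · rw [norm_smul, norm_inv, norm_norm, inv_mul_cancel₀ hnx₀.ne']
    · intro y hy
      have hyVn : y ∈ V n := hVsucc n hy
      have hyF : (⟨‖(x₀ : X)‖ • y, (V n).smul_mem _ hyVn⟩ : V n) ∈ F := by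
        show ‖(x₀ : X)‖ • y ∈ V (n + 1)
        exact (V (n + 1)).smul_mem _ hy
      have := hx₀ _ hyF
      have hnorm : ‖x₀ - (⟨‖(x₀ : X)‖ • y, (V n).smul_mem _ hyVn⟩ : V n)‖
          = ‖(x₀ : X) - ‖(x₀ : X)‖ • y‖ := rfl
      rw [hnorm] at this
      have heq : ‖(x₀ : X)‖⁻¹ • (x₀ : X) - y
          = ‖(x₀ : X)‖⁻¹ • ((x₀ : X) - ‖(x₀ : X)‖ • y) := by
        rw [smul_sub, smul_smul, inv_mul_cancel₀ hnx₀.ne', one_smul]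
      rw [heq, norm_smul, norm_inv, norm_norm, le_inv_mul_iff₀ hnx₀]
      have h2 : ‖x₀‖ = ‖(x₀ : X)‖ := rfl
      rw [h2] at this
      linarith
  choose u huV hu1 husep using hriesz
  -- separation of K (u n)
  have hsep : ∀ m n : ℕ, n < m → (1 / 2 : ℝ) ≤ ‖K (u n) - K (u m)‖ := by
    intro m n hnm
    have hz : (1 - K) (u n) + u m - (1 - K) (u m) ∈ V (n + 1) := by
      have h1 : (1 - K) (u n) ∈ V (n + 1) := by
        obtain ⟨w, hw⟩ := huV n
        exact ⟨w, by rw [ContinuousLinearMap.coe_coe, hcomm' n w, ← hw, ContinuousLinearMap.coe_coe]⟩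
      have h2 : u m ∈ V (n + 1) := hVmono hnm (huV m)
      have h3 : (1 - K) (u m) ∈ V (n + 1) := by
        have hm : (1 - K) (u m) ∈ V (m + 1) := by
          obtain ⟨w, hw⟩ := huV m
          exact ⟨w, by rw [ContinuousLinearMap.coe_coe, hcomm' m w, ← hw, ContinuousLinearMap.coe_coe]⟩
        exact hVmono (by omega : n + 1 ≤ m + 1) hm
      exact Submodule.sub_mem _ (Submodule.add_mem _ h1 h2) h3
    have := husep n _ hz
    have heq : u n - ((1 - K) (u n) + u m - (1 - K) (u m)) = K (u n) - K (u m) := by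
      simp only [ContinuousLinearMap.sub_apply, ContinuousLinearMap.one_apply]
      abel
    rwa [heq] at this
  -- compactness contradiction
  obtain ⟨M, hMc, hMsub⟩ :=
    hK.image_subset_compact_of_bounded (𝕜₁ := ℝ) (f := (K : X →ₗ[ℝ] X))
      (Metric.isBounded_closedBall (x := (0 : X)) (r := 1))
  have hmem : ∀ n, K (u n) ∈ M := by
    intro n
    exact hMsub ⟨u n, by simp [Metric.mem_closedBall, hu1 n], rfl⟩
  obtain ⟨y, _, φ, hφ, hconv⟩ := hMc.tendsto_subseq hmem
  have hcauchy : CauchySeq (fun n => K (u (φ n))) := hconv.cauchySeq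
  rw [Metric.cauchySeq_iff] at hcauchy
  obtain ⟨N, hN⟩ := hcauchy (1 / 2) (by norm_num)
  have hd := hN (N + 1) (by omega) N (by omega)
  rw [dist_eq_norm] at hd
  have := hsep (φ (N + 1)) (φ N) (hφ (by omega))
  rw [norm_sub_rev] at hd
  linarith

set_option maxHeartbeats 1000000

/-- `S2` is the unit sphere in `ℝ³`. -/
noncomputable abbrev S2 : Type := Metric.sphere (0 : EuclideanSpace ℝ (Fin 3)) 1

/-- Let `A` and `B` be compact bounded linear operators on `C(S²)` such that
`I − A` is injective, so that (by the Riesz theory) `I − A` has a bounded linear inverse `R`,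
and suppose `‖(I − A)⁻¹ ∘ (B − A) ∘ B‖ < 1`.  Then `I − B` is bijective, its inverse is a
bounded linear operator `S`, and
`‖(I − B)⁻¹‖ ≤ (1 + ‖(I − A)⁻¹ ∘ B‖) / (1 − ‖(I − A)⁻¹ ∘ (B − A) ∘ B‖)`. -/
theorem stmt_0
    (A B : C(S2, ℝ) →L[ℝ] C(S2, ℝ))
    (hA : IsCompactOperator (⇑A)) (hB : IsCompactOperator (⇑B))
    (hinj : Function.Injective (⇑(1 - A)))
    (R : C(S2, ℝ) →L[ℝ] C(S2, ℝ))
    (hR₁ : R * (1 - A) = 1) (hR₂ : (1 - A) * R = 1)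
    (hsmall : ‖R * (B - A) * B‖ < 1) :
    Function.Bijective (⇑(1 - B)) ∧
      ∃ S : C(S2, ℝ) →L[ℝ] C(S2, ℝ),
        S * (1 - B) = 1 ∧ (1 - B) * S = 1 ∧
          ‖S‖ ≤ (1 + ‖R * B‖) / (1 - ‖R * (B - A) * B‖) := by
  haveI : Nonempty S2 :=
    ((NormedSpace.sphere_nonempty (x := (0 : EuclideanSpace ℝ (Fin 3))) (r := 1)).mpr
      (by norm_num)).to_subtype
  haveI : Nontrivial C(S2, ℝ) := by
    refine ⟨0, 1, fun h => ?_⟩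
    have := congrFun (congrArg DFunLike.coe h) (Classical.arbitrary S2)
    simp at this
  set C : C(S2, ℝ) →L[ℝ] C(S2, ℝ) := R * (B - A) * B with hC
  have key : (1 + R * B) * (1 - B) = 1 - C := by
    have e0 : R * B - R * A * B = B := by
      have h0 : R * (1 - A) * B = 1 * B := by rw [hR₁]
      rwa [mul_sub, mul_one, sub_mul, one_mul, mul_assoc, ← mul_assoc] at h0
    have h2 : (1 + R * B) * (1 - B) - (1 - R * (B - A) * B) = R * B - B - R * A * B := by
      rw [mul_one_sub, add_mul, one_mul, mul_sub, sub_mul, mul_assoc, mul_assoc]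
      abel
    have h3 : (1 + R * B) * (1 - B) - (1 - R * (B - A) * B) = 0 := by
      rw [h2, sub_right_comm, e0, sub_self]
    rw [hC]
    exact sub_eq_zero.mp h3
  set u : (C(S2, ℝ) →L[ℝ] C(S2, ℝ))ˣ := Units.oneSub C hsmall with hu
  set S : C(S2, ℝ) →L[ℝ] C(S2, ℝ) := ↑u⁻¹ * (1 + R * B) with hS
  have hleft : S * (1 - B) = 1 := by
    rw [hS, mul_assoc, key]
    exact u.inv_mul
  have hleft' : ∀ z, S ((1 - B) z) = z := by
    intro z
    have h1 := ContinuousLinearMap.ext_iff.mp hleft z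
    rwa [ContinuousLinearMap.mul_apply, ContinuousLinearMap.one_apply] at h1
  have hBinj : Function.Injective (⇑(1 - B)) := by
    intro x y hxy
    rw [← hleft' x, ← hleft' y, hxy]
  have hBsurj : Function.Surjective (⇑(1 - B)) := riesz_surjective B hB hBinj
  have hright : (1 - B) * S = 1 := by
    apply ContinuousLinearMap.ext
    intro x
    obtain ⟨y, rfl⟩ := hBsurj x
    rw [ContinuousLinearMap.mul_apply, hleft' y, ContinuousLinearMap.one_apply]
  refine ⟨⟨hBinj, hBsurj⟩, S, hleft, hright, ?_⟩
  have hninv : ‖(↑u⁻¹ : C(S2, ℝ) →L[ℝ] C(S2, ℝ))‖ ≤ (1 - ‖C‖)⁻¹ := by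
    have h4 : (↑u⁻¹ : C(S2, ℝ) →L[ℝ] C(S2, ℝ)) = ∑' n : ℕ, C ^ n := rfl
    rw [h4]
    have h5 := tsum_geometric_le_of_norm_lt_one C hsmall
    rwa [norm_one, sub_self, zero_add] at h5
  have h1RB : ‖(1 : C(S2, ℝ) →L[ℝ] C(S2, ℝ)) + R * B‖ ≤ 1 + ‖R * B‖ := by
    have h6 := norm_add_le (1 : C(S2, ℝ) →L[ℝ] C(S2, ℝ)) (R * B)
    rwa [norm_one] at h6
  have hCpos : (0 : ℝ) < 1 - ‖C‖ := by linarith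
  calc ‖S‖ ≤ ‖(↑u⁻¹ : C(S2, ℝ) →L[ℝ] C(S2, ℝ))‖ * ‖(1 : C(S2, ℝ) →L[ℝ] C(S2, ℝ)) + R * B‖ :=
        norm_mul_le (↑u⁻¹ : C(S2, ℝ) →L[ℝ] C(S2, ℝ)) (1 + R * B)
    _ ≤ (1 - ‖C‖)⁻¹ * (1 + ‖R * B‖) :=
        mul_le_mul hninv h1RB (norm_nonneg ((1 : C(S2, ℝ) →L[ℝ] C(S2, ℝ)) + R * B))
          (inv_nonneg.mpr hCpos.le)
    _ = (1 + ‖R * B‖) / (1 - ‖R * (B - A) * B‖) := by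
        rw [hC, div_eq_mul_inv, mul_comm]
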